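/- Let N ≥ 4 be an integer divisible by 4. Then ∑_{s=1}^{N/4−1} 1/sin²(2πs/N) = (N² − 16)/24. -/

import Mathlib

open Finset Complex

lemma gauss1 (n : ℕ) : ∑ j ∈ range n, (j:ℂ) = n*(n-1)/2 := by
  induction n with
  | zero => simp
  | succ n ih => rw [Finset.sum_range_succ, ih]; push_cast; ring

lemma gauss2 (n : ℕ) : ∑ j ∈ range n, (j:ℂ)^2 = n*(n-1)*(2*n-1)/6 := by
  induction n with
  | zero => simp
  | succ n ih => rw [Finset.sum_range_succ, ih]; push_cast; ring

lemma lem_I1 (n : ℕ) (z : ℂ) :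
    (1 - z) * ∑ j ∈ range n, (j:ℂ) * z^j
      = (∑ j ∈ range n, z^j) - 1 - ((n:ℂ) - 1) * z^n := by
  induction n with
  | zero => simp
  | succ n ih =>
    rw [Finset.sum_range_succ, Finset.sum_range_succ (f := fun j => z^j), mul_add, ih]
    push_cast; ring

lemma lem_T (n : ℕ) (hn : 0 < n) (z : ℂ) (hz : z^n = 1) (hz1 : z ≠ 1) :
    (1 - z) * ∑ j ∈ range n, (j:ℂ) * z^j = -(n:ℂ) := by
  have h0 : ∑ j ∈ range n, z^j = 0 := by
    have := geom_sum_mul z n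
    rw [hz, sub_self] at this
    rcases mul_eq_zero.mp this with h | h
    · exact h
    · exact absurd (by linear_combination h : z = 1) hz1
  rw [lem_I1, h0, hz]; ring

lemma exp_pow_n (n j : ℕ) (hn : 0 < n) : Complex.exp (2*(Real.pi:ℂ)*I*j/n)^n = 1 := by
  have hnC : (n:ℂ) ≠ 0 := Nat.cast_ne_zero.mpr hn.ne'
  rw [← Complex.exp_nat_mul]
  have : (n:ℂ) * (2*(Real.pi:ℂ)*I*j/n) = (j:ℤ) * (2*(Real.pi:ℂ)*I) := by
    push_cast; field_simp
  rw [this]; exact Complex.exp_int_mul_two_pi_mul_I j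

lemma exp_ne_one (n j : ℕ) (hn : 0 < n) (hd : ¬ n ∣ j) :
    Complex.exp (2*(Real.pi:ℂ)*I*j/n) ≠ 1 := by
  have hnC : (n:ℂ) ≠ 0 := Nat.cast_ne_zero.mpr hn.ne'
  intro h
  obtain ⟨k, hk⟩ := Complex.exp_eq_one_iff.mp h
  have hπ : (Real.pi:ℂ) ≠ 0 := by
    simpa using Complex.ofReal_ne_zero.mpr Real.pi_ne_zero
  have h2 : (2*(Real.pi:ℂ)*I) ≠ 0 := by
    simp [hπ, Complex.I_ne_zero]
  have hjc : (j:ℂ) = (k:ℂ) * n := by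
    apply mul_left_cancel₀ h2
    field_simp at hk
    linear_combination (2*(Real.pi:ℂ)*I) * hk
  have hji : (j:ℤ) = k * n := by exact_mod_cast hjc
  have : (n:ℤ) ∣ (j:ℤ) := ⟨k, by rw [hji]; ring⟩
  exact hd (Int.natCast_dvd_natCast.mp this)

lemma pow_exp (n s j : ℕ) :
    Complex.exp (2*(Real.pi:ℂ)*I*s/n)^j = Complex.exp (2*(Real.pi:ℂ)*I*j/n)^s := by
  rw [← Complex.exp_nat_mul, ← Complex.exp_nat_mul]
  congr 1; ring


lemma lem_char (n : ℕ) (hn : 0 < n) (j : ℕ) :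
    ∑ s ∈ range n, Complex.exp (2*(Real.pi:ℂ)*I*j/n)^s
      = if n ∣ j then (n:ℂ) else 0 := by
  have hnC : (n:ℂ) ≠ 0 := Nat.cast_ne_zero.mpr hn.ne'
  by_cases hd : n ∣ j
  · obtain ⟨k, rfl⟩ := hd
    have h1 : Complex.exp (2*(Real.pi:ℂ)*I*(n*k:ℕ)/n) = 1 := by
      have : (2*(Real.pi:ℂ)*I*(n*k:ℕ)/n) = (k:ℤ) * (2*(Real.pi:ℂ)*I) := by
        push_cast; field_simp
      rw [this]
      exact Complex.exp_int_mul_two_pi_mul_I k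
    rw [if_pos (Dvd.intro k rfl), h1]
    simp
  · have hw1 := exp_ne_one n j hn hd
    have hwn := exp_pow_n n j hn
    have h3 := geom_sum_mul (Complex.exp (2*(Real.pi:ℂ)*I*j/n)) n
    rw [hwn, sub_self] at h3
    rcases mul_eq_zero.mp h3 with h | h
    · simp [hd, h]
    · exact absurd (by linear_combination h) hw1

lemma sum_range_T (n : ℕ) (hn : 0 < n) :
    ∑ s ∈ range n, ∑ j ∈ range n, (j:ℂ) * Complex.exp (2*(Real.pi:ℂ)*I*s/n)^j = 0 := by
  rw [Finset.sum_comm]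
  apply Finset.sum_eq_zero
  intro j hj
  rw [← Finset.mul_sum]
  simp only [pow_exp]
  rw [lem_char n hn j]
  rcases Nat.eq_zero_or_pos j with h | h
  · simp [h]
  · have : ¬ n ∣ j := Nat.not_dvd_of_pos_of_lt h (Finset.mem_range.mp hj)
    simp [this]

lemma sum_range_T2 (n : ℕ) (hn : 0 < n) :
    ∑ s ∈ range n, (∑ j ∈ range n, (j:ℂ) * Complex.exp (2*(Real.pi:ℂ)*I*s/n)^j)^2
      = (n:ℂ)^2 * ((n:ℂ)^2 - 1)/6 := by
  have step1 : ∀ s : ℕ, (∑ j ∈ range n, (j:ℂ) * Complex.exp (2*(Real.pi:ℂ)*I*s/n)^j)^2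
      = ∑ j ∈ range n, ∑ l ∈ range n,
          ((j:ℂ)*(l:ℂ)) * Complex.exp (2*(Real.pi:ℂ)*I*(j+l:ℕ)/n)^s := by
    intro s
    rw [sq, Finset.sum_mul_sum]
    apply Finset.sum_congr rfl; intro j _
    apply Finset.sum_congr rfl; intro l _
    rw [← pow_exp n s (j+l), pow_add]
    ring
  simp only [step1]
  rw [Finset.sum_comm]
  have step2 : ∀ j ∈ range n,
      ∑ s ∈ range n, ∑ l ∈ range n, ((j:ℂ)*(l:ℂ)) * Complex.exp (2*(Real.pi:ℂ)*I*(j+l:ℕ)/n)^s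
      = (j:ℂ) * ((n:ℂ) - (j:ℂ)) * n := by
    intro j hj
    have hjn := Finset.mem_range.mp hj
    rw [Finset.sum_comm]
    have inner : ∀ l ∈ range n,
        ∑ s ∈ range n, ((j:ℂ)*(l:ℂ)) * Complex.exp (2*(Real.pi:ℂ)*I*(j+l:ℕ)/n)^s
        = ((j:ℂ)*(l:ℂ)) * (if n ∣ (j+l) then (n:ℂ) else 0) := by
      intro l _
      rw [← Finset.mul_sum, lem_char n hn (j+l)]
    rw [Finset.sum_congr rfl inner]
    rcases Nat.eq_zero_or_pos j with h0 | h0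
    · subst h0; simp
    · rw [Finset.sum_eq_single_of_mem (n - j)]
      · have hdvd : n ∣ (j + (n - j)) := by
          have : j + (n - j) = n := by omega
          rw [this]
        rw [if_pos hdvd, Nat.cast_sub hjn.le]
      · exact Finset.mem_range.mpr (by omega)
      · intro l hl hlne
        have hln := Finset.mem_range.mp hl
        have : ¬ n ∣ (j + l) := by
          rintro ⟨c, hc⟩
          have h2 : c < 2 := by
            by_contra hcon
            push_neg at hcon
            have h3 : n*2 ≤ n*c := Nat.mul_le_mul_left n hcon
            linarith
          interval_cases c <;> simp at hc <;> omega
        rw [if_neg this, mul_zero]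
  rw [Finset.sum_congr rfl step2]
  have e1 := gauss1 n
  have e2 := gauss2 n
  have : ∑ j ∈ range n, (j:ℂ) * ((n:ℂ) - (j:ℂ)) * n
      = (n:ℂ)^2 * (∑ j ∈ range n, (j:ℂ)) - (n:ℂ) * (∑ j ∈ range n, (j:ℂ)^2) := by
    rw [Finset.mul_sum, Finset.mul_sum, ← Finset.sum_sub_distrib]
    apply Finset.sum_congr rfl; intros; ring
  rw [this, e1, e2]
  ring

lemma sum_complex (n : ℕ) (hn : 0 < n) :
    ∑ s ∈ Finset.Icc 1 (n-1),
        (4/(1 - Complex.exp (2*(Real.pi:ℂ)*I*s/n))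
          - 4/(1 - Complex.exp (2*(Real.pi:ℂ)*I*s/n))^2)
      = ((n:ℂ)^2 - 1)/3 := by
  have hnC : (n:ℂ) ≠ 0 := Nat.cast_ne_zero.mpr hn.ne'
  set T : ℕ → ℂ := fun s => ∑ j ∈ range n, (j:ℂ) * Complex.exp (2*(Real.pi:ℂ)*I*s/n)^j with hT
  have key : ∀ s ∈ Finset.Icc 1 (n-1),
      4/(1 - Complex.exp (2*(Real.pi:ℂ)*I*s/n)) - 4/(1 - Complex.exp (2*(Real.pi:ℂ)*I*s/n))^2
      = -4*(T s)/n - 4*(T s)^2/n^2 := by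
    intro s hs
    rw [Finset.mem_Icc] at hs
    have hnd : ¬ n ∣ s := Nat.not_dvd_of_pos_of_lt (by omega) (by omega)
    have hne1 := exp_ne_one n s hn hnd
    have hzn := exp_pow_n n s hn
    have hTs := lem_T n hn _ hzn hne1
    have h1 : (1 : ℂ) - Complex.exp (2*(Real.pi:ℂ)*I*s/n) ≠ 0 :=
      sub_ne_zero.mpr (Ne.symm hne1)
    have hTeq : T s = -(n:ℂ)/(1 - Complex.exp (2*(Real.pi:ℂ)*I*s/n)) := by
      rw [eq_div_iff h1]
      linear_combination hTs
    rw [hTeq]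
    field_simp
  rw [Finset.sum_congr rfl key]
  have hsplit : range n = insert 0 (Finset.Icc 1 (n-1)) := by
    ext x; simp only [Finset.mem_range, Finset.mem_insert, Finset.mem_Icc]; omega
  have h0notin : (0:ℕ) ∉ Finset.Icc 1 (n-1) := by simp
  have hT0 : T 0 = (n:ℂ)*((n:ℂ)-1)/2 := by
    have : ∀ j ∈ range n, (j:ℂ) * Complex.exp (2*(Real.pi:ℂ)*I*(0:ℕ)/n)^j = (j:ℂ) := by
      intro j _
      norm_num
    rw [hT]
    simp only []
    rw [Finset.sum_congr rfl this, gauss1]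
  have hST : ∑ s ∈ Finset.Icc 1 (n-1), T s = -((n:ℂ)*((n:ℂ)-1)/2) := by
    have h : ∑ s ∈ range n, T s = 0 := sum_range_T n hn
    rw [hsplit, Finset.sum_insert h0notin, hT0] at h
    linear_combination h
  have hST2 : ∑ s ∈ Finset.Icc 1 (n-1), (T s)^2
      = (n:ℂ)^2 * ((n:ℂ)^2 - 1)/6 - ((n:ℂ)*((n:ℂ)-1)/2)^2 := by
    have h : ∑ s ∈ range n, (T s)^2 = (n:ℂ)^2 * ((n:ℂ)^2 - 1)/6 := sum_range_T2 n hn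
    rw [hsplit, Finset.sum_insert h0notin, hT0] at h
    linear_combination h
  have e3 : ∑ x ∈ Finset.Icc 1 (n-1), (-4*T x/(n:ℂ) - 4*(T x)^2/(n:ℂ)^2)
      = (-4)*(∑ x ∈ Finset.Icc 1 (n-1), T x)/(n:ℂ)
          - 4*(∑ x ∈ Finset.Icc 1 (n-1), (T x)^2)/(n:ℂ)^2 := by
    rw [Finset.mul_sum, Finset.mul_sum, Finset.sum_div, Finset.sum_div,
      ← Finset.sum_sub_distrib]
  rw [e3, hST, hST2]
  field_simp
  ring

lemma term_eq (θ : ℝ) (h : Real.sin θ ≠ 0) :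
    ((1 / Real.sin θ ^ 2 : ℝ) : ℂ)
      = 4/(1 - Complex.exp (θ*I)^2) - 4/(1 - Complex.exp (θ*I)^2)^2 := by
  set u : ℂ := Complex.exp ((θ:ℂ)*I) with hu
  have hu0 : u ≠ 0 := Complex.exp_ne_zero _
  have hs2 : (Complex.sin (θ:ℂ))^2 = -((u⁻¹ - u)^2)/4 := by
    rw [Complex.sin, neg_mul, Complex.exp_neg, div_pow, mul_pow, Complex.I_sq]
    ring
  have hsC : Complex.sin (θ:ℂ) ≠ 0 := by
    rw [← Complex.ofReal_sin]
    exact Complex.ofReal_ne_zero.mpr h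
  have hd : u⁻¹ - u ≠ 0 := by
    intro h0
    apply hsC
    rw [Complex.sin, neg_mul, Complex.exp_neg, h0]
    simp
  have h1 : (1:ℂ) - u^2 ≠ 0 := by
    intro h0
    apply hd
    have : u * (u⁻¹ - u) = 1 - u^2 := by field_simp
    rcases mul_eq_zero.mp (this.trans h0) with h' | h'
    · exact absurd h' hu0
    · exact h'
  have hs2' : (Complex.sin (θ:ℂ))^2 = -((1 - u^2)^2)/(4*u^2) := by
    rw [hs2]
    field_simp
  push_cast
  rw [hs2']
  field_simp [hu0, h1]
  ring

lemma sum_csc (n : ℕ) (hn : 0 < n) :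
    ∑ s ∈ Finset.Icc 1 (n-1), 1 / Real.sin (Real.pi * s / n)^2 = ((n:ℝ)^2 - 1)/3 := by
  have hterm : ∀ s ∈ Finset.Icc 1 (n-1),
      ((1 / Real.sin (Real.pi * s / n)^2 : ℝ) : ℂ)
        = 4/(1 - Complex.exp (2*(Real.pi:ℂ)*I*s/n))
            - 4/(1 - Complex.exp (2*(Real.pi:ℂ)*I*s/n))^2 := by
    intro s hs
    rw [Finset.mem_Icc] at hs
    have hnR : (0:ℝ) < n := by exact_mod_cast hn
    have hsin : Real.sin (Real.pi * s / n) ≠ 0 := by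
      apply ne_of_gt
      apply Real.sin_pos_of_pos_of_lt_pi
      · apply div_pos _ hnR
        have h1s : (1:ℝ) ≤ s := by exact_mod_cast hs.1
        nlinarith [Real.pi_pos]
      · rw [div_lt_iff₀ hnR]
        have hsR : (s:ℝ) < n := by exact_mod_cast (by omega : s < n)
        nlinarith [Real.pi_pos]
    have := term_eq (Real.pi * s / n) hsin
    have hexp : Complex.exp (((Real.pi * s / n : ℝ):ℂ)*I)^2
        = Complex.exp (2*(Real.pi:ℂ)*I*s/n) := by
      rw [← Complex.exp_nat_mul]
      congr 1
      push_cast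
      have hnC : (n:ℂ) ≠ 0 := Nat.cast_ne_zero.mpr hn.ne'
      field_simp
    rw [hexp] at this
    exact this
  have hL : ((∑ s ∈ Finset.Icc 1 (n-1), 1 / Real.sin (Real.pi*s/n)^2 : ℝ) : ℂ)
      = ((n:ℂ)^2-1)/3 := by
    rw [Complex.ofReal_sum, Finset.sum_congr rfl hterm, sum_complex n hn]
  have : ((∑ s ∈ Finset.Icc 1 (n-1), 1 / Real.sin (Real.pi*s/n)^2 : ℝ) : ℂ)
      = ((((n:ℝ)^2-1)/3 : ℝ) : ℂ) := by rw [hL]; push_cast; ring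
  exact_mod_cast this

theorem sum_inv_sin_sq_even (N : ℕ) (hN4 : 4 ∣ N) (hN : 4 ≤ N) :
    ∑ s ∈ Finset.Icc 1 (N / 4 - 1),
        1 / Real.sin (2 * Real.pi * s / N) ^ 2
      = ((N : ℝ) ^ 2 - 16) / 24 := by
  obtain ⟨m, rfl⟩ := hN4
  have hm : 1 ≤ m := by omega
  have hm0 : (m:ℝ) ≠ 0 := by positivity
  have hdiv : 4 * m / 4 = m := by omega
  rw [hdiv]
  have hmR : (0:ℝ) < m := by exact_mod_cast hm
  -- rewrite terms: 2π s/(4m) = π s/(2m)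
  have hterm : ∀ s ∈ Finset.Icc 1 (m-1),
      1 / Real.sin (2 * Real.pi * s / (4*m:ℕ)) ^ 2
        = 1 / Real.sin (Real.pi * s / (2*m:ℕ)) ^ 2 := by
    intro s _
    have harg : 2 * Real.pi * (s:ℝ) / ((4*m:ℕ):ℝ) = Real.pi * s / ((2*m:ℕ):ℝ) := by
      push_cast
      rw [div_eq_div_iff (by positivity) (by positivity)]
      ring
    rw [harg]
  rw [Finset.sum_congr rfl hterm]
  have hfull := sum_csc (2*m) (by omega)
  have hsplit : Finset.Icc 1 (2*m-1) = Finset.Icc 1 (m-1) ∪ Finset.Icc m (2*m-1) := by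
    ext x; simp only [Finset.mem_Icc, Finset.mem_union]; omega
  have hdisj : Disjoint (Finset.Icc 1 (m-1)) (Finset.Icc m (2*m-1)) := by
    rw [Finset.disjoint_left]
    intro a ha hb
    rw [Finset.mem_Icc] at ha hb
    omega
  have hins : Finset.Icc m (2*m-1) = insert m (Finset.Icc (m+1) (2*m-1)) := by
    ext x; simp only [Finset.mem_Icc, Finset.mem_insert]; omega
  have hmnotin : m ∉ Finset.Icc (m+1) (2*m-1) := by
    rw [Finset.mem_Icc]; omega
  have hfm : 1 / Real.sin (Real.pi * (m:ℝ) / ((2*m:ℕ):ℝ)) ^ 2 = 1 := by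
    have : Real.pi * m / (2*m:ℕ) = Real.pi / 2 := by
      push_cast
      field_simp
    simp only [this, Real.sin_pi_div_two]
    norm_num
  have hrefl : ∑ s ∈ Finset.Icc (m+1) (2*m-1), 1 / Real.sin (Real.pi * s / ((2*m:ℕ):ℝ)) ^ 2
      = ∑ s ∈ Finset.Icc 1 (m-1), 1 / Real.sin (Real.pi * s / ((2*m:ℕ):ℝ)) ^ 2 := by
    apply Finset.sum_bij' (fun s _ => 2*m - s) (fun s _ => 2*m - s)
    · intro a ha
      rw [Finset.mem_Icc] at ha ⊢
      omega
    · intro a ha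
      rw [Finset.mem_Icc] at ha ⊢
      omega
    · intro a ha
      rw [Finset.mem_Icc] at ha
      omega
    · intro a ha
      rw [Finset.mem_Icc] at ha
      omega
    · intro a ha
      rw [Finset.mem_Icc] at ha
      have hcast : ((2*m - a : ℕ) : ℝ) = 2*(m:ℝ) - a := by
        push_cast [Nat.cast_sub (by omega : a ≤ 2*m)]
        ring
      have harg : Real.pi * ((2*m - a : ℕ):ℝ) / ((2*m:ℕ):ℝ)
          = Real.pi - Real.pi * a / ((2*m:ℕ):ℝ) := by
        rw [hcast]
        push_cast
        field_simp
      simp only [harg, Real.sin_pi_sub]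
  rw [hsplit, Finset.sum_union hdisj, hins, Finset.sum_insert hmnotin, hfm, hrefl] at hfull
  push_cast at hfull ⊢
  nlinarith [hfull]
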